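/- arXiv:0709.2153 — 2 statements merged into one kernel-verified Lean document; each statement's English description precedes it below -/
import Mathlib

section
/- Let a_1,...,a_n be distinct elements of a field K. The (i,j)-entry of the inverse of the Vandermonde matrix V_n (with (V_n)_{ij} = a_i^{j-1}) is given by c_{i,j} = (-1)^{n-i} σ̄^{a_j}(n-i) / ∏_{k ≠ j} (a_j - a_k), where σ̄^{a_j}(t) is the t-th elementary symmetric polynomial in the a_k with k ≠ j. -/
/-- The `t`-th elementary symmetric polynomial of the `a k` for `k ≠ j`. -/
def esymErase {n : ℕ} {K : Type*} [Field K] (a : Fin n → K) (j : Fin n) (t : ℕ) : K :=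
  ∑ u ∈ (Finset.univ.erase j).powersetCard t, ∏ i ∈ u, a i

open Polynomial Finset in
lemma key_vandermonde {n : ℕ} {K : Type*} [Field K] (a : Fin n → K) (j : Fin n) (x : K) :
    ∑ t : Fin n, x ^ (t : ℕ) * ((-1 : K) ^ (n - 1 - (t : ℕ)) * esymErase a j (n - 1 - (t : ℕ))) =
    ∏ k ∈ Finset.univ.erase j, (x - a k) := by
  classical
  set s := Finset.univ.erase j with hs
  have hcard : s.card = n - 1 := by
    simp [hs, Finset.card_erase_of_mem]
  set P : K[X] := ∏ k ∈ s, (X - C (a k)) with hP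
  have hPm : P = ((s.val.map a).map fun t => X - C t).prod := by
    rw [hP, Finset.prod, Multiset.map_map]; rfl
  have hmc : Multiset.card (s.val.map a) = n - 1 := by simp [hcard]
  have hcoeff : ∀ t : ℕ, t ≤ n - 1 → P.coeff t =
      (-1 : K) ^ (n - 1 - t) * esymErase a j (n - 1 - t) := by
    intro t ht
    rw [hPm, Multiset.prod_X_sub_C_coeff _ (by rw [hmc]; exact ht), hmc,
      Finset.esymm_map_val]
    rfl
  have hdeg : P.natDegree < n := by
    have : P.natDegree = n - 1 := by
      rw [hPm, Polynomial.natDegree_multiset_prod_X_sub_C_eq_card, hmc]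
    rw [this]
    exact Nat.sub_lt (Nat.pos_of_ne_zero (by rintro rfl; exact j.elim0)) one_pos
  have heval : P.eval x = ∑ t ∈ Finset.range n, P.coeff t * x ^ t :=
    Polynomial.eval_eq_sum_range' hdeg x
  have : P.eval x = ∏ k ∈ s, (x - a k) := by rw [hP, Polynomial.eval_prod]; simp
  rw [← this, heval, Finset.sum_range fun t => P.coeff t * x ^ t]
  · apply Finset.sum_congr rfl
    intro t _
    rw [hcoeff t (by omega), mul_comm]

theorem stmt5 {n : ℕ} {K : Type*} [Field K] (a : Fin n → K) (ha : Function.Injective a)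
    (i j : Fin n) :
    (Matrix.of fun i j : Fin n => a i ^ (j : ℕ))⁻¹ i j =
      (-1 : K) ^ (n - 1 - (i : ℕ)) * esymErase a j (n - 1 - (i : ℕ)) /
        ∏ k ∈ Finset.univ.erase j, (a j - a k) := by
  classical
  have hD : ∀ j : Fin n, (∏ k ∈ Finset.univ.erase j, (a j - a k)) ≠ 0 := by
    intro j
    refine Finset.prod_ne_zero_iff.2 fun k hk => ?_
    have : k ≠ j := Finset.ne_of_mem_erase hk
    exact sub_ne_zero.2 fun h => this (ha h.symm)
  set B : Matrix (Fin n) (Fin n) K := Matrix.of fun i j =>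
    (-1 : K) ^ (n - 1 - (i : ℕ)) * esymErase a j (n - 1 - (i : ℕ)) /
      ∏ k ∈ Finset.univ.erase j, (a j - a k) with hB
  have h1 : (Matrix.of fun i j : Fin n => a i ^ (j : ℕ)) * B = 1 := by
    ext i k
    rw [Matrix.mul_apply]
    have : ∑ t : Fin n, (Matrix.of fun i j : Fin n => a i ^ (j : ℕ)) i t * B t k =
        (∑ t : Fin n, a i ^ (t : ℕ) *
          ((-1 : K) ^ (n - 1 - (t : ℕ)) * esymErase a k (n - 1 - (t : ℕ)))) /
          ∏ l ∈ Finset.univ.erase k, (a k - a l) := by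
      rw [Finset.sum_div]
      exact Finset.sum_congr rfl fun t _ => by rw [hB]; simp [mul_div_assoc]
    rw [this, key_vandermonde a k (a i)]
    by_cases hik : i = k
    · subst hik
      rw [div_self (hD i), Matrix.one_apply_eq]
    · rw [Matrix.one_apply_ne hik]
      have : (∏ l ∈ Finset.univ.erase k, (a i - a l)) = 0 :=
        Finset.prod_eq_zero (Finset.mem_erase.2 ⟨hik, Finset.mem_univ i⟩) (by simp)
      rw [this, zero_div]
  rw [Matrix.inv_eq_right_inv h1]
  rfl
end

section
/- Let 1 ≤ p ≤ n and a_1,...,a_p be distinct elements of a field K, and let σ(t) denote the t-th elementary symmetric polynomial in a_1,...,a_p. Define v_1 = ((-1)^p σ(p), (-1)^{p-1} σ(p-1), ..., -σ(1), 1, 0, ..., 0) ∈ K^n and let v_2,...,v_{n-p} be its successive cyclic shifts to the right by one position. Then v_1,...,v_{n-p} form a basis of the kernel of the p×n Vandermonde matrix V_{p,n} with entries a_i^{j-1}. -/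
/-- The `t`-th elementary symmetric polynomial of `a_1, …, a_p`. -/
def esym {p : ℕ} {K : Type*} [Field K] (a : Fin p → K) (t : ℕ) : K :=
  ∑ u ∈ (Finset.univ : Finset (Fin p)).powersetCard t, ∏ i ∈ u, a i

open Polynomial in
private lemma key_sum {p : ℕ} {K : Type*} [Field K] (a : Fin p → K) (x : K) :
    ∑ t ∈ Finset.range (p + 1), (-1 : K) ^ (p - t) * esym a (p - t) * x ^ t
      = ∏ i : Fin p, (x - a i) := by
  set P : K[X] := ∏ i : Fin p, (X - C (a i)) with hPdef
  have hdeg : P.natDegree = p := by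
    rw [hPdef, natDegree_prod _ _ (fun i _ => X_sub_C_ne_zero (a i))]
    simp [natDegree_X_sub_C]
  have hcard : Multiset.card ((Finset.univ : Finset (Fin p)).val.map a) = p := by simp
  have hcoeff : ∀ k ≤ p, P.coeff k = (-1 : K) ^ (p - k) * esym a (p - k) := by
    intro k hk
    have : P = (((Finset.univ : Finset (Fin p)).val.map a).map fun t => X - C t).prod := by
      rw [hPdef, Finset.prod, Multiset.map_map]; rfl
    rw [this, Multiset.prod_X_sub_C_coeff _ (by rw [hcard]; exact hk), hcard,
      Finset.esymm_map_val]
    rfl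
  have heval : P.eval x = ∏ i : Fin p, (x - a i) := by
    simp [hPdef, eval_prod]
  rw [← heval, eval_eq_sum_range' (by omega : P.natDegree < p + 1)]
  exact Finset.sum_congr rfl fun k hk => by
    rw [hcoeff k (by simpa using Nat.lt_succ_iff.mp (Finset.mem_range.mp hk))]

private lemma esym_zero' {p : ℕ} {K : Type*} [Field K] (a : Fin p → K) : esym a 0 = 1 := by
  simp [esym]

theorem stmt11 {p n : ℕ} (hp : 1 ≤ p) (hpn : p ≤ n) {K : Type*} [Field K]
    (a : Fin p → K) (ha : Function.Injective a)
    (v : Fin (n - p) → Fin n → K)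
    (hv : ∀ m j, v m j =
      if (m : ℕ) ≤ (j : ℕ) ∧ (j : ℕ) ≤ (m : ℕ) + p then
        (-1 : K) ^ (p - ((j : ℕ) - (m : ℕ))) * esym a (p - ((j : ℕ) - (m : ℕ)))
      else 0) :
    LinearIndependent K v ∧
      Submodule.span K (Set.range v) =
        LinearMap.ker (Matrix.of fun (i : Fin p) (j : Fin n) => a i ^ (j : ℕ)).mulVecLin := by
  set V : Matrix (Fin p) (Fin n) K := Matrix.of fun (i : Fin p) (j : Fin n) => a i ^ (j : ℕ)
    with hVdef
  -- every v m is in the kernel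
  have hker : ∀ m, v m ∈ LinearMap.ker V.mulVecLin := by
    intro m
    rw [LinearMap.mem_ker, Matrix.mulVecLin_apply]
    funext i
    have hm : (m : ℕ) < n - p := m.isLt
    set e : Fin (p + 1) ↪ Fin n :=
      ⟨fun t => ⟨(m : ℕ) + (t : ℕ), by omega⟩, fun s t hst => by
        simpa [Fin.ext_iff] using hst⟩ with he
    have hval : ∀ t : Fin (p + 1), ((e t : Fin n) : ℕ) = (m : ℕ) + (t : ℕ) := fun t => rfl
    have hzero : ∀ j ∈ Finset.univ, j ∉ Finset.univ.map e → V i j * v m j = 0 := by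
      intro j _ hj
      have hcond : ¬((m : ℕ) ≤ (j : ℕ) ∧ (j : ℕ) ≤ (m : ℕ) + p) := by
        intro hcond
        exact hj (Finset.mem_map.mpr ⟨⟨(j : ℕ) - (m : ℕ), by omega⟩, Finset.mem_univ _, by
          rw [he]; exact Fin.ext (show (m : ℕ) + ((j : ℕ) - (m : ℕ)) = j by omega)⟩)
      rw [hv, if_neg hcond, mul_zero]
    show V.mulVec (v m) i = (0 : Fin p → K) i
    simp only [Matrix.mulVec, dotProduct, Pi.zero_apply]
    calc ∑ j, V i j * v m j
        = ∑ j ∈ Finset.univ.map e, V i j * v m j :=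
          (Finset.sum_subset (Finset.subset_univ _) hzero).symm
      _ = ∑ t : Fin (p + 1), V i (e t) * v m (e t) := Finset.sum_map _ e _
      _ = a i ^ (m : ℕ) *
            ∑ t ∈ Finset.range (p + 1), (-1 : K) ^ (p - t) * esym a (p - t) * a i ^ t := by
          rw [Finset.mul_sum, ← Fin.sum_univ_eq_sum_range]
          refine Finset.sum_congr rfl fun t _ => ?_
          rw [hv, hval t, if_pos ⟨Nat.le_add_right _ _, by omega⟩]
          have ht : (m : ℕ) + (t : ℕ) - (m : ℕ) = (t : ℕ) := by omega
          rw [ht, hVdef]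
          simp only [Matrix.of_apply]
          rw [hval t, pow_add]
          ring
      _ = 0 := by
          rw [key_sum, Finset.prod_eq_zero (Finset.mem_univ i) (sub_self (a i)), mul_zero]
  -- linear independence
  have hNP : ∀ m' : Fin (n - p), p + (m' : ℕ) < n := fun m' => by
    have := m'.isLt; omega
  set g : Fin (n - p) → Fin n := fun m' => ⟨p + (m' : ℕ), hNP m'⟩ with hg
  set M : Matrix (Fin (n - p)) (Fin (n - p)) K := Matrix.of fun m m' => v m (g m') with hM
  have hgval : ∀ m' : Fin (n - p), ((g m' : Fin n) : ℕ) = p + (m' : ℕ) := fun m' => by rw [hg]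
  have hMdiag : ∀ m, M m m = 1 := by
    intro m
    rw [hM]
    simp only [Matrix.of_apply]
    rw [hv, hgval m, if_pos ⟨by omega, by omega⟩]
    have h2 : p + (m : ℕ) - (m : ℕ) = p := by omega
    rw [h2, Nat.sub_self, pow_zero, esym_zero', one_mul]
  have hMtri : M.BlockTriangular OrderDual.toDual := by
    intro m m' hlt
    have hlt' : (m : ℕ) < (m' : ℕ) := hlt
    rw [hM]
    simp only [Matrix.of_apply]
    rw [hv, hgval m', if_neg (by omega)]
  have hMunit : IsUnit M := by
    rw [Matrix.isUnit_iff_isUnit_det, Matrix.det_of_lowerTriangular M hMtri]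
    simp [hMdiag]
  have hrows : LinearIndependent K (fun m => M m) :=
    Matrix.linearIndependent_rows_iff_isUnit.mpr hMunit
  have hindep : LinearIndependent K v := by
    have hcomp : (fun m => M m) = (LinearMap.funLeft K K g) ∘ v := by
      funext m; rfl
    exact LinearIndependent.of_comp (LinearMap.funLeft K K g) (hcomp ▸ hrows)
  -- surjectivity of V.mulVecLin
  have hsurj : Function.Surjective V.mulVecLin := by
    intro y
    have hW : IsUnit (Matrix.vandermonde a) := by
      rw [Matrix.isUnit_iff_isUnit_det, isUnit_iff_ne_zero]
      exact Matrix.det_vandermonde_ne_zero_iff.mpr ha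
    obtain ⟨x, hx⟩ := (Matrix.mulVec_surjective_iff_isUnit.mpr hW) y
    refine ⟨fun j => if h : (j : ℕ) < p then x ⟨(j : ℕ), h⟩ else 0, ?_⟩
    rw [Matrix.mulVecLin_apply, ← hx]
    funext i
    simp only [Matrix.mulVec, dotProduct]
    set f : Fin p ↪ Fin n := Fin.castLEEmb hpn with hf
    have hzero : ∀ j ∈ Finset.univ, j ∉ Finset.univ.map f →
        V i j * (if h : (j : ℕ) < p then x ⟨(j : ℕ), h⟩ else 0) = 0 := by
      intro j _ hj
      have : ¬((j : ℕ) < p) := by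
        intro hjp
        exact hj (Finset.mem_map.mpr ⟨⟨(j : ℕ), hjp⟩, Finset.mem_univ _, Fin.ext rfl⟩)
      rw [dif_neg this, mul_zero]
    calc ∑ j, V i j * (if h : (j : ℕ) < p then x ⟨(j : ℕ), h⟩ else 0)
        = ∑ j ∈ Finset.univ.map f, V i j * (if h : (j : ℕ) < p then x ⟨(j : ℕ), h⟩ else 0) :=
          (Finset.sum_subset (Finset.subset_univ _) hzero).symm
      _ = ∑ t : Fin p, V i (f t) * (if h : ((f t : Fin n) : ℕ) < p then x ⟨((f t : Fin n) : ℕ), h⟩ else 0) :=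
          Finset.sum_map _ f _
      _ = ∑ t : Fin p, Matrix.vandermonde a i t * x t := by
          refine Finset.sum_congr rfl fun t _ => ?_
          have hft : ((f t : Fin n) : ℕ) = (t : ℕ) := rfl
          rw [dif_pos (by rw [hft]; exact t.isLt)]
          have h1 : V i (f t) = a i ^ (t : ℕ) := by
            rw [hVdef]; simp only [Matrix.of_apply]; rw [hft]
          rw [h1, Matrix.vandermonde_apply]
          congr 1
  -- conclude via dimension count
  have hfinker : Module.finrank K (LinearMap.ker V.mulVecLin) = n - p := by
    have h1 := LinearMap.finrank_range_add_finrank_ker V.mulVecLin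
    rw [LinearMap.range_eq_top.mpr hsurj, finrank_top] at h1
    simp only [Module.finrank_fintype_fun_eq_card, Fintype.card_fin] at h1
    omega
  have hspanrank : Module.finrank K (Submodule.span K (Set.range v)) = n - p := by
    rw [finrank_span_eq_card hindep, Fintype.card_fin]
  have hle : Submodule.span K (Set.range v) ≤ LinearMap.ker V.mulVecLin :=
    Submodule.span_le.mpr (Set.range_subset_iff.mpr hker)
  exact ⟨hindep, Submodule.eq_of_le_of_finrank_le hle (by rw [hfinker, hspanrank])⟩
end
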